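/- Let Q_ε be Hermitian with Q_ε > Q, and assume Condition (C) holds for (A, Q). Let (A^(k), B^(k), Q^(k)) and (A_ε^(k), B_ε^(k), Q_ε^(k)) be the sequences for the plus-sign equation built from (A, Q) and (A, Q_ε), respectively. Then both sequences are well defined and for every k ≥ 1: Q_ε^(k) − Q^(k) ≥ Q_ε − Q and B_ε^(k) ≤ B^(k) in the Loewner order. -/

import Mathlib

open Matrix Filter Topology
open scoped ComplexOrder

noncomputable section

/-- Square complex matrices of size `n`. -/
abbrev Mat (n : ℕ) := Matrix (Fin n) (Fin n) ℂ

/-- An operator `f` on complex `n × n` matrices is *admissible* if it satisfies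
(a1) `f (f X) = X`, (a2) additivity, (a3) multiplicativity, and
(a4) `f X` is positive semidefinite whenever `X` is. -/
def Admissible {n : ℕ} (f : Mat n → Mat n) : Prop :=
  (∀ X, f (f X) = X) ∧
  (∀ X Y, f (X + Y) = f X + f Y) ∧
  (∀ X Y, f (X * Y) = f X * f Y) ∧
  (∀ X, X.PosSemidef → (f X).PosSemidef)

/-- The general recursion of the paper: with constant matrices `(Ac, Bc, Qc)` and
initial triple `init = (A⁽¹⁾, B⁽¹⁾, Q⁽¹⁾)`, step
`(A, B, Q) ↦ (Ac (Qc - B)⁻¹ A, Bc + Ac (Qc - B)⁻¹ Acᴴ, Q - Aᴴ (Qc - B)⁻¹ A)`.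
Index `k : ℕ` corresponds to the paper's index `k + 1`. -/
def nmeIter {n : ℕ} (Ac Bc Qc : Mat n) (init : Mat n × Mat n × Mat n) :
    ℕ → Mat n × Mat n × Mat n
  | 0 => init
  | k + 1 =>
    let p := nmeIter Ac Bc Qc init k
    (Ac * (Qc - p.2.1)⁻¹ * p.1,
     Bc + Ac * (Qc - p.2.1)⁻¹ * Acᴴ,
     p.2.2 - p.1ᴴ * (Qc - p.2.1)⁻¹ * p.1)

/-- The sequence `(A⁽ᵏ⁾, B⁽ᵏ⁾, Q⁽ᵏ⁾)` (indexed from `0`, so `plusSeq f A Q k` is the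
paper's `(A^{(k+1)}, B^{(k+1)}, Q^{(k+1)})`) for the plus-sign equation
`X + Aᴴ f(X)⁻¹ A = Q`. -/
def plusSeq {n : ℕ} (f : Mat n → Mat n) (A Q : Mat n) : ℕ → Mat n × Mat n × Mat n :=
  nmeIter (f A * (f Q)⁻¹ * A) (f A * (f Q)⁻¹ * (f A)ᴴ) (Q - Aᴴ * (f Q)⁻¹ * A)
    (f A * (f Q)⁻¹ * A, f A * (f Q)⁻¹ * (f A)ᴴ, Q - Aᴴ * (f Q)⁻¹ * A)

/-- `As f A Q k` is the paper's `A^{(k+1)}`. -/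
def As {n : ℕ} (f : Mat n → Mat n) (A Q : Mat n) (k : ℕ) : Mat n := (plusSeq f A Q k).1
/-- `Bs f A Q k` is the paper's `B^{(k+1)}`. -/
def Bs {n : ℕ} (f : Mat n → Mat n) (A Q : Mat n) (k : ℕ) : Mat n := (plusSeq f A Q k).2.1
/-- `Qs f A Q k` is the paper's `Q^{(k+1)}`. -/
def Qs {n : ℕ} (f : Mat n → Mat n) (A Q : Mat n) (k : ℕ) : Mat n := (plusSeq f A Q k).2.2

/- ===================== auxiliary machinery (inserted) ===================== -/

namespace NMEAux

variable {n : ℕ} {f : Mat n → Mat n}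

/-! ### Generic positive-definiteness helpers -/

lemma posDef_of_psd_unit {M : Mat n} (h : M.PosSemidef) (hU : IsUnit M.det) : M.PosDef := by
  refine posDef_iff_dotProduct_mulVec.mpr ⟨h.1, fun x hx => lt_of_le_of_ne (h.dotProduct_mulVec_nonneg x) fun heq => hx ?_⟩
  have h0 : M *ᵥ x = 0 := (h.dotProduct_mulVec_zero_iff x).mp heq.symm
  have := congrArg (fun v => M⁻¹ *ᵥ v) h0
  simpa [Matrix.mulVec_mulVec, Matrix.nonsing_inv_mul _ hU] using this

lemma detU {M : Mat n} (h : M.PosDef) : IsUnit M.det :=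
  isUnit_iff_ne_zero.mpr (ne_of_gt h.det_pos)

lemma pd_of_pd_add_psd {A B : Mat n} (hA : A.PosDef) (hB : (B - A).PosSemidef) : B.PosDef := by
  have := hA.add_posSemidef hB; simpa using this

lemma schur_swap {A B D : Mat n} (hA : A.PosDef) (hD : D.PosDef)
    (h : (D - Bᴴ * A⁻¹ * B).PosDef) : (A - B * D⁻¹ * Bᴴ).PosDef := by
  letI := A.invertibleOfIsUnitDet (detU hA)
  letI := D.invertibleOfIsUnitDet (detU hD)
  have hpsd : (fromBlocks A B Bᴴ D).PosSemidef :=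
    (Matrix.PosDef.fromBlocks₁₁ B D hA).mpr h.posSemidef
  have h2 : (A - B * D⁻¹ * Bᴴ).PosSemidef := (Matrix.PosDef.fromBlocks₂₂ A B hD).mp hpsd
  refine posDef_of_psd_unit h2 ?_
  have hdet1 : (fromBlocks A B Bᴴ D).det = A.det * (D - Bᴴ * A⁻¹ * B).det := by
    rw [Matrix.det_fromBlocks₁₁, Matrix.invOf_eq_nonsing_inv]
  have hdet2 : (fromBlocks A B Bᴴ D).det = D.det * (A - B * D⁻¹ * Bᴴ).det := by
    rw [Matrix.det_fromBlocks₂₂, Matrix.invOf_eq_nonsing_inv]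
  have hu : IsUnit (D.det * (A - B * D⁻¹ * Bᴴ).det) := by
    rw [← hdet2, hdet1]; exact (detU hA).mul (detU h)
  exact isUnit_of_mul_isUnit_right hu

lemma inv_antitone {A B : Mat n} (hA : A.PosDef) (hAB : (B - A).PosSemidef) :
    (A⁻¹ - B⁻¹).PosSemidef := by
  have hB : B.PosDef := pd_of_pd_add_psd hA hAB
  have hAi : A⁻¹.PosDef := hA.inv
  letI := A⁻¹.invertibleOfIsUnitDet (detU hAi)
  letI := B.invertibleOfIsUnitDet (detU hB)
  have key : (fromBlocks A⁻¹ (1 : Mat n) (1 : Mat n)ᴴ B).PosSemidef := by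
    rw [Matrix.PosDef.fromBlocks₁₁ _ _ hAi]
    have : B - (1 : Mat n)ᴴ * (A⁻¹)⁻¹ * 1 = B - A := by
      rw [Matrix.nonsing_inv_nonsing_inv _ (detU hA)]; simp
    rw [this]; exact hAB
  have := (Matrix.PosDef.fromBlocks₂₂ A⁻¹ (1 : Mat n) hB).mp key
  simpa using this

lemma woodbury {M U W V : Mat n} (hM : IsUnit M.det) (hV : IsUnit V.det)
    (hS : IsUnit (V - W * M⁻¹ * U).det) :
    (M - U * V⁻¹ * W)⁻¹ = M⁻¹ + M⁻¹ * U * (V - W * M⁻¹ * U)⁻¹ * W * M⁻¹ := by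
  set S := V - W * M⁻¹ * U with hSdef
  apply Matrix.inv_eq_right_inv
  have hWMU : W * M⁻¹ * U = V - S := by rw [hSdef]; abel
  have key : (M - U * V⁻¹ * W) * (M⁻¹ * U * S⁻¹) = U * V⁻¹ := by
    rw [Matrix.sub_mul]
    have e1 : M * (M⁻¹ * U * S⁻¹) = U * S⁻¹ := by
      rw [← Matrix.mul_assoc, ← Matrix.mul_assoc, Matrix.mul_nonsing_inv _ hM, Matrix.one_mul]
    have e2 : U * V⁻¹ * W * (M⁻¹ * U * S⁻¹) = U * S⁻¹ - U * V⁻¹ := by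
      have h3 : U * V⁻¹ * W * (M⁻¹ * U * S⁻¹) = U * V⁻¹ * (W * M⁻¹ * U) * S⁻¹ := by
        simp only [Matrix.mul_assoc]
      rw [h3, hWMU, Matrix.mul_sub, Matrix.sub_mul,
        Matrix.mul_assoc U V⁻¹ V, Matrix.nonsing_inv_mul _ hV, Matrix.mul_one,
        Matrix.mul_assoc (U * V⁻¹) S S⁻¹, Matrix.mul_nonsing_inv _ hS, Matrix.mul_one]
    rw [e1, e2]; abel
  have expand : (M - U * V⁻¹ * W) * (M⁻¹ + M⁻¹ * U * S⁻¹ * W * M⁻¹) =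
      (M - U * V⁻¹ * W) * M⁻¹ + ((M - U * V⁻¹ * W) * (M⁻¹ * U * S⁻¹)) * (W * M⁻¹) := by
    rw [Matrix.mul_add]; congr 1; simp only [Matrix.mul_assoc]
  rw [expand, key, Matrix.sub_mul, Matrix.mul_nonsing_inv _ hM]
  simp only [Matrix.mul_assoc]
  abel

/-! ### Properties of admissible operators -/

lemma _root_.Admissible.invol (hf : Admissible f) (X : Mat n) : f (f X) = X := hf.1 X
lemma _root_.Admissible.addl (hf : Admissible f) (X Y : Mat n) : f (X + Y) = f X + f Y := hf.2.1 X Y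
lemma _root_.Admissible.mull (hf : Admissible f) (X Y : Mat n) : f (X * Y) = f X * f Y := hf.2.2.1 X Y
lemma _root_.Admissible.psd (hf : Admissible f) {X : Mat n} (h : X.PosSemidef) :
    (f X).PosSemidef := hf.2.2.2 X h

lemma _root_.Admissible.zero (hf : Admissible f) : f 0 = 0 := by
  have h := hf.addl 0 0
  rw [add_zero] at h
  exact (add_eq_left.mp h.symm)

lemma _root_.Admissible.sub (hf : Admissible f) (X Y : Mat n) : f (X - Y) = f X - f Y := by
  have h := hf.addl (X - Y) Y
  rw [sub_add_cancel] at h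
  rw [h]; abel

lemma _root_.Admissible.neg (hf : Admissible f) (X : Mat n) : f (-X) = - f X := by
  have h := hf.sub 0 X
  rw [zero_sub] at h
  rw [h, hf.zero, zero_sub]

lemma _root_.Admissible.one (hf : Admissible f) : f 1 = 1 := by
  have h : f 1 * (1 : Mat n) = 1 := by
    have h2 := hf.mull 1 (f 1)
    rw [one_mul] at h2
    calc f 1 * 1 = f 1 * (f (f 1)) := by rw [hf.invol]
    _ = f (f 1) := h2.symm
    _ = 1 := hf.invol 1
  simpa using h

lemma _root_.Admissible.inv (hf : Admissible f) {X : Mat n} (hX : IsUnit X.det) :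
    f (X⁻¹) = (f X)⁻¹ := by
  symm
  apply Matrix.inv_eq_left_inv
  rw [← hf.mull, Matrix.nonsing_inv_mul _ hX, hf.one]

lemma _root_.Admissible.isUnit_det (hf : Admissible f) {X : Mat n} (hX : IsUnit X.det) :
    IsUnit (f X).det := by
  apply Matrix.isUnit_det_of_right_inverse (B := f X⁻¹)
  rw [← hf.mull, Matrix.mul_nonsing_inv _ hX, hf.one]

lemma herm_decomp {X : Mat n} (hX : X.IsHermitian) :
    ∃ P N : Mat n, P.PosSemidef ∧ N.PosSemidef ∧ X = P - N := by
  classical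
  let U : Mat n := (hX.eigenvectorUnitary : Mat n)
  let dP : Fin n → ℝ := fun i => max (hX.eigenvalues i) 0
  let dN : Fin n → ℝ := fun i => max (-(hX.eigenvalues i)) 0
  have hP : (diagonal (RCLike.ofReal ∘ dP) : Mat n).PosSemidef := by
    apply Matrix.PosSemidef.diagonal
    intro i
    simp only [Function.comp_apply, Pi.zero_apply]
    exact RCLike.ofReal_nonneg.mpr (le_max_right _ _)
  have hN : (diagonal (RCLike.ofReal ∘ dN) : Mat n).PosSemidef := by
    apply Matrix.PosSemidef.diagonal
    intro i
    simp only [Function.comp_apply, Pi.zero_apply]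
    exact RCLike.ofReal_nonneg.mpr (le_max_right _ _)
  refine ⟨U * diagonal (RCLike.ofReal ∘ dP) * star U, U * diagonal (RCLike.ofReal ∘ dN) * star U,
      ?_, ?_, ?_⟩
  · simpa [Matrix.star_eq_conjTranspose] using hP.mul_mul_conjTranspose_same U
  · simpa [Matrix.star_eq_conjTranspose] using hN.mul_mul_conjTranspose_same U
  · have hdd : (diagonal (RCLike.ofReal ∘ dP) : Mat n) - diagonal (RCLike.ofReal ∘ dN)
        = diagonal (RCLike.ofReal ∘ hX.eigenvalues) := by
      ext i j
      by_cases h : i = j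
      · subst h
        simp only [Matrix.sub_apply, Matrix.diagonal_apply_eq, Function.comp_apply, dP, dN]
        rw [← RCLike.ofReal_sub]
        exact congrArg _ (max_zero_sub_max_neg_zero_eq_self _)
      · simp [Matrix.diagonal_apply_ne _ h]
    rw [← Matrix.sub_mul, ← Matrix.mul_sub, hdd]
    exact hX.spectral_theorem

lemma _root_.Admissible.herm (hf : Admissible f) {X : Mat n} (hX : X.IsHermitian) :
    (f X).IsHermitian := by
  obtain ⟨P, N, hP, hN, rfl⟩ := herm_decomp hX
  rw [hf.sub]
  exact (hf.psd hP).isHermitian.sub (hf.psd hN).isHermitian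

lemma _root_.Admissible.J_comm (hf : Admissible f) (W : Mat n) :
    f (Complex.I • 1) * W = W * f (Complex.I • 1) := by
  have key : ∀ Z : Mat n, f (Complex.I • 1) * f Z = f Z * f (Complex.I • 1) := by
    intro Z
    rw [← hf.mull, ← hf.mull, Matrix.smul_mul, Matrix.mul_smul, one_mul, mul_one]
  have h := key (f W)
  rwa [hf.invol] at h

lemma _root_.Admissible.J_sq (hf : Admissible f) :
    f (Complex.I • 1) * f (Complex.I • 1) = -1 := by
  rw [← hf.mull]
  have h : (Complex.I • 1 : Mat n) * (Complex.I • 1) = -1 := by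
    rw [Matrix.smul_mul, Matrix.mul_smul, one_mul, smul_smul, Complex.I_mul_I, neg_smul, one_smul]
  rw [h, hf.neg, hf.one]

lemma _root_.Admissible.J_spec (hf : Admissible f) :
    f (Complex.I • 1) = Complex.I • 1 ∨ f (Complex.I • 1) = -(Complex.I • 1) := by
  rcases Nat.eq_zero_or_pos n with h0 | hpos
  · subst h0; left; exact Subsingleton.elim _ _
  obtain ⟨c, hc⟩ := Matrix.mem_range_scalar_of_commute_single
    (M := f (Complex.I • 1)) (fun i j _ => (hf.J_comm _).symm)
  have hc' : f (Complex.I • 1) = c • 1 := by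
    rw [← hc, Matrix.scalar_apply]
    ext i j
    by_cases h : i = j
    · subst h; simp
    · simp [Matrix.diagonal_apply_ne _ h, Matrix.one_apply_ne h]
  have hcc : c * c = -1 := by
    have h2 := hf.J_sq
    rw [hc'] at h2
    have h3 := congrFun (congrFun h2 ⟨0, hpos⟩) ⟨0, hpos⟩
    simpa [Matrix.smul_mul, Matrix.mul_smul, smul_smul, Matrix.one_apply] using h3
  have hfac : (c - Complex.I) * (c + Complex.I) = 0 := by
    ring_nf; rw [Complex.I_sq]; linear_combination hcc
  rcases mul_eq_zero.mp hfac with h | h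
  · left; rw [hc', sub_eq_zero.mp h]
  · right; rw [hc', eq_neg_of_add_eq_zero_left h, neg_smul]

lemma _root_.Admissible.conjT (hf : Admissible f) (X : Mat n) : f (Xᴴ) = (f X)ᴴ := by
  set J := f (Complex.I • 1) with hJ
  have hJH : Jᴴ = -J := by
    rcases hf.J_spec with h | h <;> rw [hJ, h]
    · rw [Matrix.conjTranspose_smul, Matrix.conjTranspose_one]
      simp [Complex.conj_I]
    · rw [Matrix.conjTranspose_neg, Matrix.conjTranspose_smul, Matrix.conjTranspose_one]
      simp [Complex.conj_I]
  have hImI : Complex.I * -Complex.I = 1 := by rw [mul_neg, Complex.I_mul_I, neg_neg]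
  set S : Mat n := X + Xᴴ with hS
  set K : Mat n := (-Complex.I) • (X - Xᴴ) with hK
  have hSh : S.IsHermitian := by
    rw [hS, Matrix.IsHermitian, Matrix.conjTranspose_add, Matrix.conjTranspose_conjTranspose,
      add_comm]
  have hKh : K.IsHermitian := by
    rw [hK, Matrix.IsHermitian, Matrix.conjTranspose_smul, Matrix.conjTranspose_sub,
      Matrix.conjTranspose_conjTranspose]
    rw [show (star (-Complex.I) : ℂ) = Complex.I by simp]
    rw [show (Xᴴ - X) = -(X - Xᴴ) by abel]
    rw [smul_neg, ← neg_smul]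
  have hIK : Complex.I • K = X - Xᴴ := by
    rw [hK, smul_smul, hImI, one_smul]
  have hd1 : X + X = S + Complex.I • K := by rw [hIK, hS]; abel
  have hd2 : Xᴴ + Xᴴ = S - Complex.I • K := by rw [hIK, hS]; abel
  have hsmul : ∀ Y : Mat n, f (Complex.I • Y) = J * f Y := by
    intro Y
    rw [show Complex.I • Y = (Complex.I • 1) * Y by rw [Matrix.smul_mul, one_mul], hf.mull]
  have key : f (Xᴴ) + f (Xᴴ) = (f X)ᴴ + (f X)ᴴ := by
    have e1 : f (Xᴴ) + f (Xᴴ) = f S - J * f K := by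
      rw [← hf.addl, hd2, hf.sub, hsmul]
    have e2 : (f X)ᴴ + (f X)ᴴ = (f (X + X))ᴴ := by
      rw [hf.addl, Matrix.conjTranspose_add]
    rw [e1, e2, hd1, hf.addl S (Complex.I • K), hsmul K, Matrix.conjTranspose_add,
      (hf.herm hSh).eq, Matrix.conjTranspose_mul, (hf.herm hKh).eq, hJH, Matrix.mul_neg,
      ← hf.J_comm (f K)]
    abel
  have h2 : (2 : ℂ) • f (Xᴴ) = (2 : ℂ) • (f X)ᴴ := by
    rw [two_smul, two_smul]; exact key
  exact smul_right_injective (Mat n) two_ne_zero h2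

lemma _root_.Admissible.posDef (hf : Admissible f) {X : Mat n} (hX : X.PosDef) :
    (f X).PosDef :=
  posDef_of_psd_unit (hf.psd hX.posSemidef) (hf.isUnit_det (detU hX))

end NMEAux

namespace NMEAux

/-- fixed-point iteration `Y_{m+1} = Q - Aᴴ f(Y_m)⁻¹ A`, `Y 0 = Q`. -/
def Yit {n : ℕ} (f : Mat n → Mat n) (A Q : Mat n) : ℕ → Mat n
  | 0 => Q
  | m + 1 => Q - Aᴴ * (f (Yit f A Q m))⁻¹ * A

/-- dual iteration `Z_{m+1} = Q - f(A) f(Z_m)⁻¹ f(A)ᴴ`, `Z 0 = Q`. -/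
def Zit {n : ℕ} (f : Mat n → Mat n) (A Q : Mat n) : ℕ → Mat n
  | 0 => Q
  | m + 1 => Q - f A * (f (Zit f A Q m))⁻¹ * (f A)ᴴ

section Core

variable {n : ℕ} {f : Mat n → Mat n} {A XS Q : Mat n}

/-- `Condition (C)` packaged. -/
def SubSol (f : Mat n → Mat n) (A XS Q : Mat n) : Prop :=
  (Q - Aᴴ * (f XS)⁻¹ * A - XS).PosSemidef

lemma Ylb (hf : Admissible f) (hXS : XS.PosDef) (hsub : SubSol f A XS Q) :
    ∀ m, (Yit f A Q m - XS).PosSemidef := by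
  have hfXS : (f XS).PosDef := hf.posDef hXS
  have hCpsd : (Aᴴ * (f XS)⁻¹ * A).PosSemidef := hfXS.inv.posSemidef.conjTranspose_mul_mul_same A
  intro m
  induction m with
  | zero =>
    have he : Yit f A Q 0 - XS = (Q - Aᴴ * (f XS)⁻¹ * A - XS) + Aᴴ * (f XS)⁻¹ * A := by
      show Q - XS = _; abel
    rw [he]; exact hsub.add hCpsd
  | succ m ih =>
    have hYm : (Yit f A Q m).PosDef := pd_of_pd_add_psd hXS ih
    have hmono : (f (Yit f A Q m) - f XS).PosSemidef := by
      rw [← hf.sub]; exact hf.psd ih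
    have hinv : ((f XS)⁻¹ - (f (Yit f A Q m))⁻¹).PosSemidef := inv_antitone hfXS hmono
    have hcongr : (Aᴴ * ((f XS)⁻¹ - (f (Yit f A Q m))⁻¹) * A).PosSemidef :=
      hinv.conjTranspose_mul_mul_same A
    have he : Yit f A Q (m+1) - XS = (Q - Aᴴ * (f XS)⁻¹ * A - XS)
        + Aᴴ * ((f XS)⁻¹ - (f (Yit f A Q m))⁻¹) * A := by
      show Q - Aᴴ * (f (Yit f A Q m))⁻¹ * A - XS = _
      rw [Matrix.mul_sub, Matrix.sub_mul]; abel
    rw [he]; exact hsub.add hcongr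

lemma Ypd (hf : Admissible f) (hXS : XS.PosDef) (hsub : SubSol f A XS Q) (m : ℕ) :
    (Yit f A Q m).PosDef :=
  pd_of_pd_add_psd hXS (Ylb hf hXS hsub m)

lemma Mpd (hf : Admissible f) (hXS : XS.PosDef) (hsub : SubSol f A XS Q) :
    ∀ m t, (Zit f A Q m - Aᴴ * (f (Yit f A Q t))⁻¹ * A).PosDef := by
  intro m
  induction m with
  | zero =>
    intro t
    have : Zit f A Q 0 - Aᴴ * (f (Yit f A Q t))⁻¹ * A = Yit f A Q (t+1) := by
      show Q - Aᴴ * (f (Yit f A Q t))⁻¹ * A = _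
      rfl
    rw [this]; exact Ypd hf hXS hsub (t+1)
  | succ m ih =>
    intro t
    have hQpd : (Yit f A Q 0).PosDef := Ypd hf hXS hsub 0
    have hfQ : (f Q).PosDef := hf.posDef hQpd
    have hZm : (Zit f A Q m).PosDef := by
      apply pd_of_pd_add_psd (ih 0)
      have he : Zit f A Q m - (Zit f A Q m - Aᴴ * (f (Yit f A Q 0))⁻¹ * A)
          = Aᴴ * (f Q)⁻¹ * A := by
        show _ = Aᴴ * (f (Yit f A Q 0))⁻¹ * A
        abel
      rw [he]
      exact hfQ.inv.posSemidef.conjTranspose_mul_mul_same A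
    have hfZm : (f (Zit f A Q m)).PosDef := hf.posDef hZm
    have hY1 : (Yit f A Q (t+1)).PosDef := Ypd hf hXS hsub (t+1)
    have harg : (f (Zit f A Q m) - (f A)ᴴ * (Yit f A Q (t+1))⁻¹ * (f A)).PosDef := by
      have h := hf.posDef (ih (t+1))
      rw [hf.sub, hf.mull, hf.mull, hf.conjT,
        hf.inv (detU (hf.posDef (Ypd hf hXS hsub (t+1)))), hf.invol] at h
      exact h
    have he : Zit f A Q (m+1) - Aᴴ * (f (Yit f A Q t))⁻¹ * A
        = Yit f A Q (t+1) - f A * (f (Zit f A Q m))⁻¹ * (f A)ᴴ := by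
      show Q - f A * (f (Zit f A Q m))⁻¹ * (f A)ᴴ - Aᴴ * (f (Yit f A Q t))⁻¹ * A
          = (Q - Aᴴ * (f (Yit f A Q t))⁻¹ * A) - f A * (f (Zit f A Q m))⁻¹ * (f A)ᴴ
      abel
    rw [he]
    exact schur_swap hY1 hfZm harg

lemma Zpd (hf : Admissible f) (hXS : XS.PosDef) (hsub : SubSol f A XS Q) (m : ℕ) :
    (Zit f A Q m).PosDef := by
  have hfQ : (f Q).PosDef := hf.posDef (Ypd hf hXS hsub 0)
  apply pd_of_pd_add_psd (Mpd hf hXS hsub m 0)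
  have he : Zit f A Q m - (Zit f A Q m - Aᴴ * (f (Yit f A Q 0))⁻¹ * A)
      = Aᴴ * (f Q)⁻¹ * A := by
    show _ = Aᴴ * (f (Yit f A Q 0))⁻¹ * A
    abel
  rw [he]
  exact hfQ.inv.posSemidef.conjTranspose_mul_mul_same A

end Core

end NMEAux

namespace NMEAux

section Ids

variable {n : ℕ} {f : Mat n → Mat n} {A XS Q : Mat n}

lemma Yit_zero : Yit f A Q 0 = Q := rfl

lemma fZ_succ (hf : Admissible f) (hXS : XS.PosDef) (hsub : SubSol f A XS Q) (m : ℕ) :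
    f (Zit f A Q (m+1)) = f Q - A * (Zit f A Q m)⁻¹ * Aᴴ := by
  have hZm : (Zit f A Q m).PosDef := Zpd hf hXS hsub m
  show f (Q - f A * (f (Zit f A Q m))⁻¹ * (f A)ᴴ) = _
  rw [hf.sub, hf.mull, hf.mull, hf.conjT, hf.inv (detU (hf.posDef hZm)), hf.invol, hf.invol]

lemma fY_succ (hf : Admissible f) (hXS : XS.PosDef) (hsub : SubSol f A XS Q) (t : ℕ) :
    f (Yit f A Q (t+1)) = f Q - (f A)ᴴ * (Yit f A Q t)⁻¹ * f A := by
  have hYt : (Yit f A Q t).PosDef := Ypd hf hXS hsub t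
  show f (Q - Aᴴ * (f (Yit f A Q t))⁻¹ * A) = _
  rw [hf.sub, hf.mull, hf.mull, hf.conjT, hf.inv (detU (hf.posDef hYt)), hf.invol]

lemma LZ2 (hf : Admissible f) (hXS : XS.PosDef) (hsub : SubSol f A XS Q) (m : ℕ) :
    Zit f A Q (m+2) = Q - f A * (f Q)⁻¹ * (f A)ᴴ
      - f A * (f Q)⁻¹ * A * (Zit f A Q m - Aᴴ * (f Q)⁻¹ * A)⁻¹
        * (Aᴴ * (f Q)⁻¹ * (f A)ᴴ) := by
  have hfQ : (f Q).PosDef := hf.posDef (Ypd hf hXS hsub 0)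
  have hZm : (Zit f A Q m).PosDef := Zpd hf hXS hsub m
  have hS : (Zit f A Q m - Aᴴ * (f Q)⁻¹ * A).PosDef := by
    have h := Mpd hf hXS hsub m 0
    rwa [Yit_zero] at h
  have hstep : Zit f A Q (m+2) = Q - f A * (f (Zit f A Q (m+1)))⁻¹ * (f A)ᴴ := rfl
  rw [hstep, fZ_succ hf hXS hsub m,
    woodbury (detU hfQ) (detU hZm) (detU hS)]
  simp only [Matrix.mul_add, Matrix.add_mul, Matrix.mul_assoc]
  abel

lemma LYinv (hf : Admissible f) (hXS : XS.PosDef) (hsub : SubSol f A XS Q) (t : ℕ) :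
    (f (Yit f A Q (t+2)))⁻¹ = (f Q)⁻¹ + (f Q)⁻¹ * (f A)ᴴ
      * (Yit f A Q (t+1) - f A * (f Q)⁻¹ * (f A)ᴴ)⁻¹ * f A * (f Q)⁻¹ := by
  have hfQ : (f Q).PosDef := hf.posDef (Ypd hf hXS hsub 0)
  have hY1 : (Yit f A Q (t+1)).PosDef := Ypd hf hXS hsub (t+1)
  have hSe : Yit f A Q (t+1) - f A * (f Q)⁻¹ * (f A)ᴴ
      = Zit f A Q 1 - Aᴴ * (f (Yit f A Q t))⁻¹ * A := by
    show Q - Aᴴ * (f (Yit f A Q t))⁻¹ * A - f A * (f Q)⁻¹ * (f A)ᴴ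
        = Q - f A * (f (Zit f A Q 0))⁻¹ * (f A)ᴴ - Aᴴ * (f (Yit f A Q t))⁻¹ * A
    abel
  have hS : (Yit f A Q (t+1) - f A * (f Q)⁻¹ * (f A)ᴴ).PosDef := by
    rw [hSe]; exact Mpd hf hXS hsub 1 t
  rw [fY_succ hf hXS hsub (t+1)]
  exact woodbury (detU hfQ) (detU hY1) (detU hS)

end Ids

end NMEAux

namespace NMEAux

section Seq
set_option maxHeartbeats 2000000

variable {n : ℕ} {f : Mat n → Mat n} {A XS Q : Mat n}

lemma A1H_eq (hfQh : (f Q).IsHermitian) :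
    (f A * (f Q)⁻¹ * A)ᴴ = Aᴴ * (f Q)⁻¹ * (f A)ᴴ := by
  rw [Matrix.conjTranspose_mul, Matrix.conjTranspose_mul, Matrix.conjTranspose_nonsing_inv,
    hfQh.eq, Matrix.mul_assoc]

lemma Bs_succ_eq (k : ℕ) : Bs f A Q (k+1) = f A * (f Q)⁻¹ * (f A)ᴴ
    + f A * (f Q)⁻¹ * A * (Qs f A Q 0 - Bs f A Q k)⁻¹ * (f A * (f Q)⁻¹ * A)ᴴ := rfl

lemma Qs_succ_eq (k : ℕ) : Qs f A Q (k+1) = Qs f A Q k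
    - (As f A Q k)ᴴ * (Qs f A Q 0 - Bs f A Q k)⁻¹ * As f A Q k := rfl

lemma As_succ_eq (k : ℕ) : As f A Q (k+1)
    = f A * (f Q)⁻¹ * A * (Qs f A Q 0 - Bs f A Q k)⁻¹ * As f A Q k := rfl

lemma LB (hf : Admissible f) (hXS : XS.PosDef) (hsub : SubSol f A XS Q) :
    ∀ k, Bs f A Q k = Q - Zit f A Q (2*k+1) := by
  intro k
  induction k with
  | zero =>
    show f A * (f Q)⁻¹ * (f A)ᴴ = Q - (Q - f A * (f (Zit f A Q 0))⁻¹ * (f A)ᴴ)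
    abel
  | succ k ih =>
    have hfQ : (f Q).PosDef := hf.posDef (Ypd hf hXS hsub 0)
    have hW : Qs f A Q 0 - Bs f A Q k = Zit f A Q (2*k+1) - Aᴴ * (f Q)⁻¹ * A := by
      rw [ih]
      show Q - Aᴴ * (f Q)⁻¹ * A - (Q - Zit f A Q (2*k+1)) = _
      abel
    rw [Bs_succ_eq, A1H_eq hfQ.isHermitian, hW,
      show 2*(k+1)+1 = (2*k+1)+2 from by ring, LZ2 hf hXS hsub (2*k+1)]
    simp only [Matrix.mul_assoc]
    abel

lemma LW (hf : Admissible f) (hXS : XS.PosDef) (hsub : SubSol f A XS Q) (k : ℕ) :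
    Qs f A Q 0 - Bs f A Q k = Zit f A Q (2*k+1) - Aᴴ * (f Q)⁻¹ * A := by
  rw [LB hf hXS hsub k]
  show Q - Aᴴ * (f Q)⁻¹ * A - (Q - Zit f A Q (2*k+1)) = _
  abel

lemma Wpd (hf : Admissible f) (hXS : XS.PosDef) (hsub : SubSol f A XS Q) (k : ℕ) :
    (Zit f A Q (2*k+1) - Aᴴ * (f Q)⁻¹ * A).PosDef := by
  have h := Mpd hf hXS hsub (2*k+1) 0
  rwa [Yit_zero] at h

lemma LG (hf : Admissible f) (hXS : XS.PosDef) (hsub : SubSol f A XS Q) :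
    ∀ k t, Qs f A Q k - (As f A Q k)ᴴ
      * (Zit f A Q (2*k+1) - Aᴴ * (f (Yit f A Q t))⁻¹ * A)⁻¹ * As f A Q k
      = Yit f A Q (2*k+t+3) := by
  have hfQ : (f Q).PosDef := hf.posDef (Ypd hf hXS hsub 0)
  intro k
  induction k with
  | zero =>
    intro t
    have hSe : Yit f A Q (t+1) - f A * (f Q)⁻¹ * (f A)ᴴ
        = Zit f A Q 1 - Aᴴ * (f (Yit f A Q t))⁻¹ * A := by
      show Q - Aᴴ * (f (Yit f A Q t))⁻¹ * A - f A * (f Q)⁻¹ * (f A)ᴴ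
          = Q - f A * (f (Zit f A Q 0))⁻¹ * (f A)ᴴ - Aᴴ * (f (Yit f A Q t))⁻¹ * A
      abel
    have hidx0 : 2*0+t+3 = t+3 := by ring
    have hY3 : Yit f A Q (2*0+t+3) = Q - Aᴴ * (f (Yit f A Q (t+2)))⁻¹ * A := by
      rw [hidx0]; rfl
    rw [hY3, LYinv hf hXS hsub t, hSe]
    show Q - Aᴴ * (f Q)⁻¹ * A
        - (f A * (f Q)⁻¹ * A)ᴴ * (Zit f A Q 1 - Aᴴ * (f (Yit f A Q t))⁻¹ * A)⁻¹
          * (f A * (f Q)⁻¹ * A) = _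
    rw [A1H_eq hfQ.isHermitian]
    simp only [Matrix.mul_add, Matrix.add_mul, Matrix.mul_assoc]
    abel
  | succ k ih =>
    intro t
    have hW := LW hf hXS hsub k
    have hWpd := Wpd hf hXS hsub k
    have hV : (Yit f A Q (t+1) - f A * (f Q)⁻¹ * (f A)ᴴ).PosDef := by
      have hSe : Yit f A Q (t+1) - f A * (f Q)⁻¹ * (f A)ᴴ
          = Zit f A Q 1 - Aᴴ * (f (Yit f A Q t))⁻¹ * A := by
        show Q - Aᴴ * (f (Yit f A Q t))⁻¹ * A - f A * (f Q)⁻¹ * (f A)ᴴ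
            = Q - f A * (f (Zit f A Q 0))⁻¹ * (f A)ᴴ - Aᴴ * (f (Yit f A Q t))⁻¹ * A
        abel
      rw [hSe]; exact Mpd hf hXS hsub 1 t
    have hS'e : Yit f A Q (t+1) - f A * (f Q)⁻¹ * (f A)ᴴ
        - f A * (f Q)⁻¹ * A * (Zit f A Q (2*k+1) - Aᴴ * (f Q)⁻¹ * A)⁻¹
          * (Aᴴ * (f Q)⁻¹ * (f A)ᴴ)
        = Zit f A Q (2*k+3) - Aᴴ * (f (Yit f A Q t))⁻¹ * A := by
      rw [show (2*k+3) = (2*k+1)+2 from by ring, LZ2 hf hXS hsub (2*k+1)]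
      show Q - Aᴴ * (f (Yit f A Q t))⁻¹ * A - f A * (f Q)⁻¹ * (f A)ᴴ
          - f A * (f Q)⁻¹ * A * (Zit f A Q (2*k+1) - Aᴴ * (f Q)⁻¹ * A)⁻¹
            * (Aᴴ * (f Q)⁻¹ * (f A)ᴴ) = _
      abel
    have hS'pd : (Zit f A Q (2*k+3) - Aᴴ * (f (Yit f A Q t))⁻¹ * A).PosDef :=
      Mpd hf hXS hsub (2*k+3) t
    have hstar : (Zit f A Q (2*k+1) - Aᴴ * (f (Yit f A Q (t+2)))⁻¹ * A)⁻¹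
        = (Zit f A Q (2*k+1) - Aᴴ * (f Q)⁻¹ * A)⁻¹
          + (Zit f A Q (2*k+1) - Aᴴ * (f Q)⁻¹ * A)⁻¹ * (Aᴴ * (f Q)⁻¹ * (f A)ᴴ)
            * (Zit f A Q (2*k+3) - Aᴴ * (f (Yit f A Q t))⁻¹ * A)⁻¹
            * (f A * (f Q)⁻¹ * A)
            * (Zit f A Q (2*k+1) - Aᴴ * (f Q)⁻¹ * A)⁻¹ := by
      have harg : Zit f A Q (2*k+1) - Aᴴ * (f (Yit f A Q (t+2)))⁻¹ * A
          = Zit f A Q (2*k+1) - Aᴴ * (f Q)⁻¹ * A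
            - (Aᴴ * (f Q)⁻¹ * (f A)ᴴ)
              * (Yit f A Q (t+1) - f A * (f Q)⁻¹ * (f A)ᴴ)⁻¹ * (f A * (f Q)⁻¹ * A) := by
        rw [LYinv hf hXS hsub t]
        simp only [Matrix.mul_add, Matrix.add_mul, Matrix.mul_assoc]
        abel
      rw [harg, woodbury (detU hWpd) (detU hV) (by rw [hS'e]; exact detU hS'pd), hS'e]
    have hidx1 : 2*(k+1)+1 = 2*k+3 := by ring
    have hidx2 : 2*(k+1)+t+3 = 2*k+(t+2)+3 := by ring
    have hconj : (f A * (f Q)⁻¹ * A * (Zit f A Q (2*k+1) - Aᴴ * (f Q)⁻¹ * A)⁻¹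
          * As f A Q k)ᴴ
        = (As f A Q k)ᴴ * ((Zit f A Q (2*k+1) - Aᴴ * (f Q)⁻¹ * A)⁻¹
            * (Aᴴ * (f Q)⁻¹ * (f A)ᴴ)) := by
      rw [Matrix.conjTranspose_mul, Matrix.conjTranspose_mul (f A * (f Q)⁻¹ * A),
        A1H_eq hfQ.isHermitian, Matrix.conjTranspose_nonsing_inv, hWpd.isHermitian.eq]
    rw [hidx1, hidx2, ← ih (t+2), Qs_succ_eq, As_succ_eq, hW, hstar, hconj]
    simp only [Matrix.mul_add, Matrix.add_mul, Matrix.mul_assoc]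
    abel

lemma LQ (hf : Admissible f) (hXS : XS.PosDef) (hsub : SubSol f A XS Q) :
    ∀ k, Qs f A Q k = Yit f A Q (2*k+1) := by
  intro k
  induction k with
  | zero => rfl
  | succ k _ =>
    have h := LG hf hXS hsub k 0
    rw [Yit_zero] at h
    have hidx : 2*k+0+3 = 2*(k+1)+1 := by ring
    rw [hidx] at h
    rw [← h, Qs_succ_eq, LW hf hXS hsub k]

end Seq

end NMEAux

namespace NMEAux

section Comp
set_option maxHeartbeats 1000000

variable {n : ℕ} {f : Mat n → Mat n} {A XS Q Qe : Mat n}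

lemma Ycomp (hf : Admissible f) (hXS : XS.PosDef) (hsubQ : SubSol f A XS Q)
    (hsubE : SubSol f A XS Qe) (hge : (Qe - Q).PosSemidef) :
    ∀ m, (Yit f A Qe m - Yit f A Q m - (Qe - Q)).PosSemidef := by
  intro m
  induction m with
  | zero =>
    have he : Yit f A Qe 0 - Yit f A Q 0 - (Qe - Q) = 0 := by
      show Qe - Q - (Qe - Q) = 0; abel
    rw [he]; exact Matrix.PosSemidef.zero
  | succ m ih =>
    have hdiff : (Yit f A Qe m - Yit f A Q m).PosSemidef := by
      have he : Yit f A Qe m - Yit f A Q m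
          = (Yit f A Qe m - Yit f A Q m - (Qe - Q)) + (Qe - Q) := by abel
      rw [he]; exact ih.add hge
    have hfmono : (f (Yit f A Qe m) - f (Yit f A Q m)).PosSemidef := by
      rw [← hf.sub]; exact hf.psd hdiff
    have hinv : ((f (Yit f A Q m))⁻¹ - (f (Yit f A Qe m))⁻¹).PosSemidef :=
      inv_antitone (hf.posDef (Ypd hf hXS hsubQ m)) hfmono
    have he : Yit f A Qe (m+1) - Yit f A Q (m+1) - (Qe - Q)
        = Aᴴ * ((f (Yit f A Q m))⁻¹ - (f (Yit f A Qe m))⁻¹) * A := by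
      show Qe - Aᴴ * (f (Yit f A Qe m))⁻¹ * A - (Q - Aᴴ * (f (Yit f A Q m))⁻¹ * A) - (Qe - Q) = _
      rw [Matrix.mul_sub, Matrix.sub_mul]
      abel
    rw [he]
    exact hinv.conjTranspose_mul_mul_same A

lemma Zcomp (hf : Admissible f) (hXS : XS.PosDef) (hsubQ : SubSol f A XS Q)
    (hsubE : SubSol f A XS Qe) (hge : (Qe - Q).PosSemidef) :
    ∀ m, (Zit f A Qe m - Zit f A Q m - (Qe - Q)).PosSemidef := by
  intro m
  induction m with
  | zero =>
    have he : Zit f A Qe 0 - Zit f A Q 0 - (Qe - Q) = 0 := by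
      show Qe - Q - (Qe - Q) = 0; abel
    rw [he]; exact Matrix.PosSemidef.zero
  | succ m ih =>
    have hdiff : (Zit f A Qe m - Zit f A Q m).PosSemidef := by
      have he : Zit f A Qe m - Zit f A Q m
          = (Zit f A Qe m - Zit f A Q m - (Qe - Q)) + (Qe - Q) := by abel
      rw [he]; exact ih.add hge
    have hfmono : (f (Zit f A Qe m) - f (Zit f A Q m)).PosSemidef := by
      rw [← hf.sub]; exact hf.psd hdiff
    have hinv : ((f (Zit f A Q m))⁻¹ - (f (Zit f A Qe m))⁻¹).PosSemidef :=
      inv_antitone (hf.posDef (Zpd hf hXS hsubQ m)) hfmono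
    have he : Zit f A Qe (m+1) - Zit f A Q (m+1) - (Qe - Q)
        = f A * ((f (Zit f A Q m))⁻¹ - (f (Zit f A Qe m))⁻¹) * (f A)ᴴ := by
      show Qe - f A * (f (Zit f A Qe m))⁻¹ * (f A)ᴴ
          - (Q - f A * (f (Zit f A Q m))⁻¹ * (f A)ᴴ) - (Qe - Q) = _
      rw [Matrix.mul_sub, Matrix.sub_mul]
      abel
    rw [he]
    exact hinv.mul_mul_conjTranspose_same (f A)

end Comp

end NMEAux

/-- comparison with a perturbed plus-sign equation with `Q_ε > Q`:
both sequences are well defined, `Q_ε^{(k)} - Q^{(k)} ≥ Q_ε - Q` and `B_ε^{(k)} ≤ B^{(k)}`. -/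
theorem stmt_16 {n : ℕ} (f : Mat n → Mat n) (hf : Admissible f)
    (A Q Qe : Mat n) (hQ : Q.PosDef) (hQe : Qe.IsHermitian) (hgt : (Qe - Q).PosDef)
    (XS : Mat n) (hXS : XS.PosDef)
    (hXSle : (Q - Aᴴ * (f XS)⁻¹ * A - XS).PosSemidef) :
    (∀ k, (Qs f A Q 0 - Bs f A Q k).PosDef ∧ (Qs f A Qe 0 - Bs f A Qe k).PosDef) ∧
    (∀ k, (Qs f A Qe k - Qs f A Q k - (Qe - Q)).PosSemidef ∧
      (Bs f A Q k - Bs f A Qe k).PosSemidef) := by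
  classical
  have hsubQ : NMEAux.SubSol f A XS Q := hXSle
  have hsubE : NMEAux.SubSol f A XS Qe := by
    have he : Qe - Aᴴ * (f XS)⁻¹ * A - XS = (Qe - Q) + (Q - Aᴴ * (f XS)⁻¹ * A - XS) := by abel
    show (Qe - Aᴴ * (f XS)⁻¹ * A - XS).PosSemidef
    rw [he]
    exact hgt.posSemidef.add hXSle
  refine ⟨fun k => ⟨?_, ?_⟩, fun k => ⟨?_, ?_⟩⟩
  · rw [NMEAux.LW hf hXS hsubQ k]
    exact NMEAux.Wpd hf hXS hsubQ k
  · rw [NMEAux.LW hf hXS hsubE k]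
    exact NMEAux.Wpd hf hXS hsubE k
  · rw [NMEAux.LQ hf hXS hsubE k, NMEAux.LQ hf hXS hsubQ k]
    exact NMEAux.Ycomp hf hXS hsubQ hsubE hgt.posSemidef (2*k+1)
  · rw [NMEAux.LB hf hXS hsubQ k, NMEAux.LB hf hXS hsubE k]
    have he : Q - NMEAux.Zit f A Q (2*k+1) - (Qe - NMEAux.Zit f A Qe (2*k+1))
        = NMEAux.Zit f A Qe (2*k+1) - NMEAux.Zit f A Q (2*k+1) - (Qe - Q) := by abel
    rw [he]
    exact NMEAux.Zcomp hf hXS hsubQ hsubE hgt.posSemidef (2*k+1)
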